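/- arXiv:1310.4656 — 6 statements merged into one kernel-verified Lean document; each statement's English description precedes it below -/
import Mathlib

section
/- Let k ≥ 1 and a ≥ 3k be positive integers with 7 dividing a², and set m = (13/7)·k·a² + 2·k·a + 9·k. Then (a+1)²·a − m ≥ k·((8/7)·a² + 12·k − 6) > 0; in particular (a+1)²·a > m. -/
/-- With `m = (13/7)ka² + 2ka + 9k`, `k ≥ 1`, `a ≥ 3k`:
`(a+1)²a − m ≥ k((8/7)a² + 12k − 6) > 0`, in particular `(a+1)²a > m`. -/
theorem stmt_7 (k a m : ℤ) (hk : 1 ≤ k) (ha : 3 * k ≤ a)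
    (hdvd : (7 : ℤ) ∣ a ^ 2)
    (hm : 7 * m = 13 * k * a ^ 2 + 14 * k * a + 63 * k) :
    (((a : ℚ) + 1) ^ 2 * (a : ℚ) - (m : ℚ)
        ≥ (k : ℚ) * ((8 / 7) * (a : ℚ) ^ 2 + 12 * (k : ℚ) - 6)) ∧
    ((k : ℚ) * ((8 / 7) * (a : ℚ) ^ 2 + 12 * (k : ℚ) - 6) > 0) ∧
    (a + 1) ^ 2 * a > m := by
  have ha3 : (3 : ℤ) ≤ a := le_trans (by nlinarith) ha
  have h1 : 7 * ((a + 1) ^ 2 * a - m) ≥ k * (8 * a ^ 2 + 84 * k - 42) := by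
    nlinarith [mul_nonneg (mul_nonneg (sub_nonneg.2 ha) (by linarith : (0:ℤ) ≤ k)) (by linarith : (0:ℤ) ≤ a),
      mul_nonneg (mul_nonneg (sub_nonneg.2 ha) (sub_nonneg.2 ha)) (by linarith : (0:ℤ) ≤ a),
      mul_nonneg (sub_nonneg.2 ha) (by nlinarith : (0:ℤ) ≤ k * k)]
  have h2 : (0 : ℤ) < k * (8 * a ^ 2 + 84 * k - 42) := by nlinarith
  have hq1 : (((a : ℚ) + 1) ^ 2 * (a : ℚ) - (m : ℚ)
      ≥ (k : ℚ) * ((8 / 7) * (a : ℚ) ^ 2 + 12 * (k : ℚ) - 6)) := by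
    have := (Int.cast_le (R := ℚ)).2 h1
    push_cast at this
    linarith
  have hq2 : ((k : ℚ) * ((8 / 7) * (a : ℚ) ^ 2 + 12 * (k : ℚ) - 6) > 0) := by
    have := (Int.cast_lt (R := ℚ)).2 h2
    push_cast at this
    linarith
  exact ⟨hq1, hq2, by nlinarith⟩
end

section
/- Let k > 3 and a ≥ 3k be integers with 7 ∣ a². Set m = (13/7)·k·a² + 2·k·a + 9·k. Then for every integer a_t ≥ 1, m·a_t − (k·a_t + 2)·(a² + 2·a + 6) ≥ (6/7)·k·a² + 3·k − 2·a² − 4·a − 12 ≥ (4/7)·a² − 4·a − 3 > 0. -/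
/-- The chain of estimates from Lemma 6 of the reduction. -/
theorem stmt_9 (k a m t : ℤ) (hk : 3 < k) (ha : 3 * k ≤ a)
    (hdvd : (7 : ℤ) ∣ a ^ 2)
    (hm : 7 * m = 13 * k * a ^ 2 + 14 * k * a + 63 * k)
    (ht : 1 ≤ t) :
    ((m : ℚ) * (t : ℚ) - ((k : ℚ) * (t : ℚ) + 2) * ((a : ℚ) ^ 2 + 2 * (a : ℚ) + 6)
        ≥ (6 / 7) * (k : ℚ) * (a : ℚ) ^ 2 + 3 * (k : ℚ) - 2 * (a : ℚ) ^ 2 - 4 * (a : ℚ) - 12) ∧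
    ((6 / 7) * (k : ℚ) * (a : ℚ) ^ 2 + 3 * (k : ℚ) - 2 * (a : ℚ) ^ 2 - 4 * (a : ℚ) - 12
        ≥ (4 / 7) * (a : ℚ) ^ 2 - 4 * (a : ℚ) - 3) ∧
    ((4 / 7) * (a : ℚ) ^ 2 - 4 * (a : ℚ) - 3 > 0) := by
  have hkq : (4:ℚ) ≤ (k:ℚ) := by exact_mod_cast hk
  have haq : 3 * (k:ℚ) ≤ (a:ℚ) := by exact_mod_cast ha
  have htq : (1:ℚ) ≤ (t:ℚ) := by exact_mod_cast ht
  have hmq : 7 * (m:ℚ) = 13 * (k:ℚ) * (a:ℚ)^2 + 14 * (k:ℚ) * (a:ℚ) + 63 * (k:ℚ) := by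
    exact_mod_cast hm
  have ha12 : (12:ℚ) ≤ (a:ℚ) := by linarith
  refine ⟨?_, ?_, ?_⟩
  · nlinarith [mul_nonneg (by linarith : (0:ℚ) ≤ (t:ℚ) - 1)
      (by nlinarith [sq_nonneg ((a:ℚ))] : (0:ℚ) ≤ 6*(k:ℚ)*(a:ℚ)^2 + 21*(k:ℚ)), sq_nonneg ((a:ℚ))]
  · nlinarith [mul_nonneg (by linarith : (0:ℚ) ≤ (k:ℚ) - 3) (sq_nonneg ((a:ℚ)))]
  · nlinarith [sq_nonneg ((a:ℚ) - 12)]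
end

section
/- Let k ≥ 1 and a ≥ 3k be integers with 7 ∣ a², and set m = (13/7)·k·a² + 2·k·a + 9·k. If a_t is a positive integer with a_t < a/(2k), then m − (k·a_t + 2)·(k·a + 6·k) ≥ k·((19/14)·a² − 3·a − 3) > 0. -/
/-- The estimate from Lemma 7: with `m = (13/7)ka² + 2ka + 9k` and `a_t < a/(2k)`,
`m − (k·a_t + 2)(ka + 6k) ≥ k((19/14)a² − 3a − 3) > 0`. -/
theorem stmt_10 (k a m t : ℤ) (hk : 1 ≤ k) (ha : 3 * k ≤ a)
    (hdvd : (7 : ℤ) ∣ a ^ 2)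
    (hm : 7 * m = 13 * k * a ^ 2 + 14 * k * a + 63 * k)
    (ht : 1 ≤ t) (htb : (t : ℚ) < (a : ℚ) / (2 * (k : ℚ))) :
    ((m : ℚ) - ((k : ℚ) * (t : ℚ) + 2) * ((k : ℚ) * (a : ℚ) + 6 * (k : ℚ))
        ≥ (k : ℚ) * ((19 / 14) * (a : ℚ) ^ 2 - 3 * (a : ℚ) - 3)) ∧
    ((k : ℚ) * ((19 / 14) * (a : ℚ) ^ 2 - 3 * (a : ℚ) - 3) > 0) := by
  have hkq : (0 : ℚ) < (k : ℚ) := by exact_mod_cast lt_of_lt_of_le zero_lt_one hk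
  have h2q : 2 * (k : ℚ) * t < a := by
    have := (lt_div_iff₀ (by positivity : (0:ℚ) < 2 * (k:ℚ))).mp htb
    linarith
  have h2 : 2 * k * t + 1 ≤ a := by
    have : 2 * k * t < a := by exact_mod_cast h2q
    omega
  have h2' : 2 * (k:ℚ) * t + 1 ≤ (a:ℚ) := by exact_mod_cast h2
  have hmq : 7 * (m:ℚ) = 13 * k * (a:ℚ) ^ 2 + 14 * k * a + 63 * k := by exact_mod_cast hm
  have haq : 3 * (k:ℚ) ≤ a := by exact_mod_cast ha
  have hkq1 : (1:ℚ) ≤ (k:ℚ) := by exact_mod_cast hk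
  have ha3 : (3:ℚ) ≤ (a:ℚ) := by linarith
  constructor
  · nlinarith [mul_nonneg (le_of_lt hkq) (by linarith : (0:ℚ) ≤ (a:ℚ) - 2*(k:ℚ)*t - 1),
      mul_nonneg (mul_nonneg (le_of_lt hkq) (by linarith : (0:ℚ) ≤ (a:ℚ) - 2*(k:ℚ)*t - 1)) (by linarith : (0:ℚ) ≤ (a:ℚ) + 6),
      mul_nonneg (le_of_lt hkq) (by linarith : (0:ℚ) ≤ (a:ℚ))]
  · nlinarith [mul_pos hkq (by nlinarith : (0:ℚ) < 19/14 * (a:ℚ)^2 - 3*a - 3)]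
end

section
/- Consider any division of G(A) into communities C₁, …, C_k (where Cⱼ contains exactly one biclique K_j together with some element-vertex pairs) plus the 6k stars as singleton communities, such that each pair (xᵢ, yᵢ) lies in one biclique community. Then the number of inter-community edges is exactly 2·a·(k−1) + 6·k, independently of the assignment of element pairs to biclique communities. -/
/-- Vertices of the gadget network `G(A)`: for each of the `k` bicliques, a red (`true`)
and blue (`false`) copy of `Σ i, Fin (av i)` (so `a` vertices per side, grouped by the
element they attach to); the `6k` element vertices `xᵢ` (red) and `yᵢ` (blue); the `6k`
star internal vertices; and `6k·L` star leaves (`L = a²/7`). `StarInt/StarLeaf (i, c, _)`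
belong to the star attached to the element vertex `(i, c)`. -/
def GadgetVert (k L : ℕ) (av : Fin (3 * k) → ℕ) : Type :=
  (Fin k × Bool × Σ i : Fin (3 * k), Fin (av i)) ⊕   -- biclique vertices
  (Fin (3 * k) × Bool) ⊕                              -- element vertices
  (Fin (3 * k) × Bool) ⊕                              -- star internal vertices
  (Fin (3 * k) × Bool × Fin L)                        -- star leaves

/-- The base relation generating the edges of `G(A)`. -/
def gadgetRel (k L : ℕ) (av : Fin (3 * k) → ℕ) :
    GadgetVert k L av → GadgetVert k L av → Prop :=
  fun x y =>
    match x, y with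
    | Sum.inl (t, c, _), Sum.inl (t', c', _) =>
        t = t' ∧ c = true ∧ c' = false
    | Sum.inr (Sum.inl (i, c)), Sum.inl (_, c', ⟨i', _⟩) =>
        i = i' ∧ c' = !c
    | Sum.inr (Sum.inl (i, c)), Sum.inr (Sum.inl (i', c')) =>
        i = i' ∧ c = true ∧ c' = false
    | Sum.inr (Sum.inl (i, c)), Sum.inr (Sum.inr (Sum.inl (i', c'))) =>
        i = i' ∧ c = c'
    | Sum.inr (Sum.inr (Sum.inl (i, c))), Sum.inr (Sum.inr (Sum.inr (i', c', _))) =>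
        i = i' ∧ c = c'
    | _, _ => False

/-- The gadget network `G(A)` as a simple graph. -/
def gadgetGraph (k L : ℕ) (av : Fin (3 * k) → ℕ) : SimpleGraph (GadgetVert k L av) :=
  SimpleGraph.fromRel (gadgetRel k L av)

/-- The community of each vertex in a division where biclique `j` together with the
element pairs assigned to it by `σ` forms community `Sum.inl j`, and each star (internal
vertex plus its leaves) forms its own community `Sum.inr (i, c)`. -/
def commOf (k L : ℕ) (av : Fin (3 * k) → ℕ) (σ : Fin (3 * k) → Fin k) :
    GadgetVert k L av → Fin k ⊕ (Fin (3 * k) × Bool) :=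
  fun v =>
    match v with
    | Sum.inl (t, _, _) => Sum.inl t
    | Sum.inr (Sum.inl (i, _)) => Sum.inl (σ i)
    | Sum.inr (Sum.inr (Sum.inl (i, c))) => Sum.inr (i, c)
    | Sum.inr (Sum.inr (Sum.inr (i, c, _))) => Sum.inr (i, c)

def CutIdx (k : ℕ) (av : Fin (3 * k) → ℕ) (σ : Fin (3 * k) → Fin k) : Type :=
  (Σ i : Fin (3 * k), Fin (av i) × Bool × {t : Fin k // t ≠ σ i}) ⊕ (Fin (3 * k) × Bool)

def cutMap (k L : ℕ) (av : Fin (3 * k) → ℕ) (σ : Fin (3 * k) → Fin k) :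
    CutIdx k av σ → Sym2 (GadgetVert k L av)
  | Sum.inl ⟨i, p, c, t⟩ =>
      s(Sum.inr (Sum.inl (i, c)), Sum.inl (t.1, !c, ⟨i, p⟩))
  | Sum.inr (i, c) =>
      s(Sum.inr (Sum.inl (i, c)), Sum.inr (Sum.inr (Sum.inl (i, c))))


lemma cutMap_inj (k L : ℕ) (av : Fin (3 * k) → ℕ) (σ : Fin (3 * k) → Fin k) :
    Function.Injective (cutMap k L av σ) := by
  rintro (⟨i, p, c, t, ht⟩ | ⟨i, c⟩) (⟨i', p', c', t', ht'⟩ | ⟨i', c'⟩) h <;>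
      simp only [cutMap] at h <;>
      replace h := Sym2.eq_iff.mp h <;>
      rcases h with ⟨h1, h2⟩ | ⟨h1, h2⟩ <;>
      try (first | exact absurd h1 (by simp) | exact absurd h2 (by simp))
  · injection h1 with h1
    injection h1 with h1
    obtain ⟨hi, hc⟩ := Prod.ext_iff.mp h1
    dsimp at hi hc
    subst hi; subst hc
    injection h2 with h2
    simp only [Prod.mk.injEq, Sigma.mk.inj_iff, heq_eq_eq] at h2
    obtain ⟨ht2, -, -, hp⟩ := h2
    subst ht2
    subst hp
    rfl
  · injection h1 with h1
    injection h1 with h1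
    obtain ⟨hi, hc⟩ := Prod.ext_iff.mp h1
    dsimp at hi hc
    subst hi; subst hc
    rfl
  · injection h1 with h1
    exact absurd h1 Sum.inl_ne_inr

lemma cutMap_range (k L : ℕ) (av : Fin (3 * k) → ℕ) (σ : Fin (3 * k) → Fin k) :
    Set.range (cutMap k L av σ) =
      {e ∈ (gadgetGraph k L av).edgeSet |
        ¬ (Sym2.map (commOf k L av σ) e).IsDiag} := by
  ext e
  constructor
  · rintro ⟨idx, rfl⟩
    rcases idx with ⟨i, p, c, t, ht⟩ | ⟨i, c⟩
    · refine ⟨?_, ?_⟩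
      · have : (gadgetGraph k L av).Adj (Sum.inr (Sum.inl (i, c)))
            (Sum.inl (t, !c, ⟨i, p⟩)) := by
          refine (SimpleGraph.fromRel_adj ..).mpr ?_
          exact ⟨by simp [GadgetVert], Or.inl ⟨rfl, rfl⟩⟩
        exact this
      · rw [cutMap]; erw [Sym2.map_pair_eq, Sym2.mk_isDiag_iff]
        intro h
        exact ht (Sum.inl.inj h).symm
    · refine ⟨?_, ?_⟩
      · have : (gadgetGraph k L av).Adj (Sum.inr (Sum.inl (i, c)))
            (Sum.inr (Sum.inr (Sum.inl (i, c)))) := by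
          refine (SimpleGraph.fromRel_adj ..).mpr ?_
          exact ⟨fun h => Sum.inl_ne_inr (Sum.inr_injective h), Or.inl ⟨rfl, rfl⟩⟩
        exact this
      · rw [cutMap]; erw [Sym2.map_pair_eq, Sym2.mk_isDiag_iff]
        exact Sum.inl_ne_inr
  · induction e using Sym2.ind with
  | _ x y =>
    rintro ⟨hadj, hdiag⟩
    rw [SimpleGraph.mem_edgeSet, gadgetGraph, SimpleGraph.fromRel_adj] at hadj
    obtain ⟨hne, hrel⟩ := hadj
    rw [Sym2.map_pair_eq, Sym2.mk_isDiag_iff] at hdiag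
    rcases x with ⟨t, c, iq, pq⟩ | (⟨i, c⟩ | (⟨i, c⟩ | ⟨i, c, l⟩)) <;>
      rcases y with ⟨t', c', iq', pq'⟩ | (⟨i', c'⟩ | (⟨i', c'⟩ | ⟨i', c', l'⟩)) <;>
      rcases hrel with hr | hr <;>
      simp only [gadgetRel] at hr <;>
      try exact hr.elim
    -- biclique-biclique, rel x y
    · exact absurd (congrArg Sum.inl hr.1) hdiag
    -- biclique-biclique, rel y x
    · exact absurd (congrArg Sum.inl hr.1.symm) hdiag
    -- biclique-element, rel y x
    · obtain ⟨h1, rfl⟩ := hr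
      subst h1
      exact ⟨Sum.inl ⟨i', pq, c', ⟨t, fun hEq => hdiag (congrArg Sum.inl hEq)⟩⟩,
        Sym2.eq_swap⟩
    -- element-biclique, rel x y
    · obtain ⟨h1, rfl⟩ := hr
      subst h1
      exact ⟨Sum.inl ⟨i, pq', c, ⟨t', fun hEq => hdiag (congrArg Sum.inl hEq).symm⟩⟩, rfl⟩
    -- element-element, rel x y
    · exact absurd (congrArg (fun j => Sum.inl (σ j)) hr.1) hdiag
    -- element-element, rel y x
    · exact absurd (congrArg (fun j => Sum.inl (σ j)) hr.1.symm) hdiag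
    -- element-starint, rel x y
    · obtain ⟨h1, h2⟩ := hr
      subst h1; subst h2
      exact ⟨Sum.inr (i, c), rfl⟩
    -- starint-element, rel y x
    · obtain ⟨h1, h2⟩ := hr
      subst h1; subst h2
      exact ⟨Sum.inr (i', c'), Sym2.eq_swap⟩
    -- starint-leaf, rel x y
    · exact absurd (congrArg (fun q => Sum.inr q) (Prod.ext hr.1 hr.2)) hdiag
    -- leaf-starint, rel y x
    · exact absurd (congrArg (fun q => Sum.inr q) (Prod.ext hr.1.symm hr.2.symm)) hdiag

/-- For any assignment `σ` of element pairs to biclique communities, the number of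
inter-community edges of `G(A)` is exactly `2a(k−1) + 6k`. -/
theorem stmt_15 (k a : ℕ) (hk : 0 < k) (ha : 0 < a) (hdvd : 7 ∣ a ^ 2)
    (av : Fin (3 * k) → ℕ) (hpos : ∀ i, 0 < av i) (hsum : ∑ i, av i = a)
    (σ : Fin (3 * k) → Fin k) :
    {e ∈ (gadgetGraph k (a ^ 2 / 7) av).edgeSet |
        ¬ (Sym2.map (commOf k (a ^ 2 / 7) av σ) e).IsDiag}.ncard
      = 2 * a * (k - 1) + 6 * k := by
  rw [← cutMap_range k (a ^ 2 / 7) av σ, ← Set.image_univ,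
    Set.ncard_image_of_injective _ (cutMap_inj k (a ^ 2 / 7) av σ), Set.ncard_univ]
  have h1 : Nat.card (CutIdx k av σ)
      = Nat.card (Σ i : Fin (3 * k), Fin (av i) × Bool × {t : Fin k // t ≠ σ i})
        + Nat.card (Fin (3 * k) × Bool) := Nat.card_sum
  rw [h1, Nat.card_eq_fintype_card, Nat.card_eq_fintype_card, Fintype.card_sigma]
  have h2 : ∀ i : Fin (3 * k), Fintype.card {t : Fin k // t ≠ σ i} = k - 1 := by
    intro i
    have := Fintype.card_subtype_compl (fun t : Fin k => t = σ i)
    simpa [Fintype.card_subtype_eq] using this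
  have h3 : ∀ i : Fin (3 * k),
      Fintype.card (Fin (av i) × Bool × {t : Fin k // t ≠ σ i})
        = av i * (2 * (k - 1)) := by
    intro i
    simp [h2 i]
  rw [Finset.sum_congr rfl fun i _ => h3 i, ← Finset.sum_mul, hsum]
  have : Fintype.card (Fin (3 * k) × Bool) = 6 * k := by simp; ring
  rw [this]
  ring
end

section
/- Suppose R_{Cⱼ} = a² + 2a + 6 for every biclique community Cⱼ, where the red element vertices assigned to Cⱼ have degrees k·aᵢ + 2 with b/4 < aᵢ < b/2 and a = k·b. Then each Cⱼ contains exactly three red element vertices x_s, x_t, x_u with a_s + a_t + a_u = b. -/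
/-- If every biclique community attains red degree sum `a² + 2a + 6`, then each community
contains exactly three element vertices, whose elements sum to `b`. -/
theorem stmt_17 (k a b : ℕ) (hk : 1 ≤ k) (hb : 0 < b) (hab : a = k * b)
    (av : Fin (3 * k) → ℕ) (hpos : ∀ i, 0 < av i) (hsum : ∑ i, av i = a)
    (hlow : ∀ i, b < 4 * av i) (hhigh : ∀ i, 2 * av i < b)
    (σ : Fin (3 * k) → Fin k)
    (hR : ∀ j, a * (a + 1)
        + ∑ i ∈ Finset.univ.filter (fun i => σ i = j), (k * av i + 2)
        = a ^ 2 + 2 * a + 6) :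
    ∀ j, (Finset.univ.filter (fun i => σ i = j)).card = 3 ∧
      ∑ i ∈ Finset.univ.filter (fun i => σ i = j), av i = b := by
  intro j
  set S := Finset.univ.filter (fun i => σ i = j) with hSdef
  have h6 : ∑ i ∈ S, (k * av i + 2) = a + 6 := by
    have h := hR j
    rw [← hSdef] at h
    have ha : a * (a + 1) + (a + 6) = a ^ 2 + 2 * a + 6 := by ring
    omega
  set s := ∑ i ∈ S, av i with hs
  set c := S.card with hc
  have hkey : k * s + 2 * c = k * b + 6 := by
    have : ∑ i ∈ S, (k * av i + 2) = k * s + 2 * c := by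
      rw [Finset.sum_add_distrib, Finset.sum_const, smul_eq_mul, ← Finset.mul_sum,
        mul_comm S.card 2]
    omega
  rcases S.eq_empty_or_nonempty with he | hne
  · exfalso
    have hs0 : s = 0 := by rw [hs, he, Finset.sum_empty]
    have hc0 : c = 0 := by rw [hc, he, Finset.card_empty]
    rw [hs0, hc0] at hkey
    simp at hkey
  have h1 : c * b < 4 * s := by
    calc c * b = ∑ _i ∈ S, b := by rw [Finset.sum_const, smul_eq_mul]
    _ < ∑ i ∈ S, 4 * av i := Finset.sum_lt_sum_of_nonempty hne (fun i _ => hlow i)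
    _ = 4 * s := by rw [hs, Finset.mul_sum]
  have h2 : 2 * s < c * b := by
    calc 2 * s = ∑ i ∈ S, 2 * av i := by rw [hs, Finset.mul_sum]
    _ < ∑ _i ∈ S, b := Finset.sum_lt_sum_of_nonempty hne (fun i _ => hhigh i)
    _ = c * b := by rw [Finset.sum_const, smul_eq_mul]
  have hc3 : c = 3 := by
    by_contra hne3
    rcases Nat.lt_or_ge c 3 with hlt | hge
    · -- c ≤ 2 : k*s ≥ k*b + 2 → s > b → 2s > 2b ≥ c*b, contradiction
      have hks : k * b + 2 ≤ k * s := by omega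
      have hsb : b < s := by
        by_contra hsb'
        push_neg at hsb'
        have : k * s ≤ k * b := Nat.mul_le_mul_left k hsb'
        omega
      have : c * b ≤ 2 * b := by
        have : c ≤ 2 := by omega
        exact Nat.mul_le_mul_right b this
      omega
    · -- c ≥ 4 : k*s ≤ k*b - 2 → s < b → 4s < 4b, but c*b ≥ 4b > 4s > c*b
      have hc4 : 4 ≤ c := by omega
      have hks : k * s + 2 ≤ k * b := by omega
      have hsb : s < b := by
        by_contra hsb'
        push_neg at hsb'
        have : k * b ≤ k * s := Nat.mul_le_mul_left k hsb'
        omega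
      have : 4 * b ≤ c * b := Nat.mul_le_mul_right b hc4
      omega
  refine ⟨hc3, ?_⟩
  rw [hc3] at hkey
  have : k * s = k * b := by omega
  exact Nat.eq_of_mul_eq_mul_left (by omega) this
end

section
/- Let 𝒞 be a partition of the vertices of a bipartite graph and let 𝒞' be obtained from 𝒞 by moving a red leaf ℓ (a degree-1 red vertex) from its current community C₁ into the community C₂ containing its unique neighbor, where ℓ ∉ C₂. Then Q_b(𝒞') − Q_b(𝒞) = 1/m − B'/m² + B₁/m², where B' is the sum of the degrees of blue vertices of C₂ and B₁ that of C₁∖{ℓ}; in particular if B' < m and B₁ ≥ 0 then Q_b(𝒞') > Q_b(𝒞) whenever B' < m + B₁— specifically, if the blue degree sum of C₂ is strictly less than m, the move strictly increases Q_b. -/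
open scoped Classical

/-- Barber's bipartite modularity of the division given by the fibers of `P`. -/
noncomputable def bipartiteModularity {V ι : Type*} [Fintype V] [Fintype ι]
    (G : SimpleGraph V) (c : V → Bool) (m : ℕ) (P : V → ι) : ℚ :=
  ∑ j, ((({e ∈ G.edgeSet | Sym2.map P e = Sym2.diag j}).ncard : ℚ) / m
    - (∑ v ∈ Finset.univ.filter (fun v => P v = j ∧ c v = true),
        ((G.neighborSet v).ncard : ℚ))
      * (∑ v ∈ Finset.univ.filter (fun v => P v = j ∧ c v = false),
        ((G.neighborSet v).ncard : ℚ)) / (m : ℚ) ^ 2)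

/-- Moving a red leaf `ℓ` into the community of its unique neighbor `v` changes the
bipartite modularity by exactly `1/m − B'/m² + B₁/m²`, where `B'` is the blue degree sum
of the neighbor's community and `B₁` that of `ℓ`'s old community minus `ℓ`; in particular
the move strictly increases modularity whenever `B' < m`. -/
theorem stmt_19 {V ι : Type*} [Fintype V] [Fintype ι] [DecidableEq V]
    (G : SimpleGraph V) (c : V → Bool)
    (hbip : ∀ x y, G.Adj x y → c x ≠ c y)
    (m : ℕ) (hm : m = G.edgeSet.ncard) (hm1 : 1 ≤ m)
    (P : V → ι) (ℓ v : V)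
    (hred : c ℓ = true) (hleaf : G.neighborSet ℓ = {v})
    (hsep : P ℓ ≠ P v)
    (B' B₁ : ℚ)
    (hB' : B' = ∑ w ∈ Finset.univ.filter (fun w => P w = P v ∧ c w = false),
        ((G.neighborSet w).ncard : ℚ))
    (hB₁ : B₁ = ∑ w ∈ Finset.univ.filter (fun w => P w = P ℓ ∧ c w = false ∧ w ≠ ℓ),
        ((G.neighborSet w).ncard : ℚ)) :
    (bipartiteModularity G c m (Function.update P ℓ (P v))
        - bipartiteModularity G c m P
      = 1 / m - B' / (m : ℚ) ^ 2 + B₁ / (m : ℚ) ^ 2) ∧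
    ((B' : ℚ) < m →
      bipartiteModularity G c m (Function.update P ℓ (P v))
        > bipartiteModularity G c m P) := by
  have hvmem : v ∈ G.neighborSet ℓ := by rw [hleaf]; exact Set.mem_singleton v
  have hadj : G.Adj ℓ v := hvmem
  have hne : ℓ ≠ v := G.ne_of_adj hadj
  set P' := Function.update P ℓ (P v) with hP'def
  have hP'ℓ : P' ℓ = P v := Function.update_self ℓ (P v) P
  have hP'w : ∀ w, w ≠ ℓ → P' w = P w := fun w hw => Function.update_of_ne hw _ _
  have hedge : ∀ e ∈ G.edgeSet, ℓ ∈ e → e = s(ℓ, v) := by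
    intro e he hle
    induction e with
    | h x y =>
      rcases Sym2.mem_iff.mp hle with rfl | rfl
      · have : y ∈ G.neighborSet ℓ := he
        rw [hleaf, Set.mem_singleton_iff] at this
        rw [this]
      · have : x ∈ G.neighborSet ℓ := (G.mem_edgeSet.mp he).symm
        rw [hleaf, Set.mem_singleton_iff] at this
        rw [this, Sym2.eq_swap]
  have hmapP' : ∀ e ∈ G.edgeSet, e ≠ s(ℓ, v) → Sym2.map P' e = Sym2.map P e := by
    intro e he hne'
    have hℓ : ℓ ∉ e := fun h => hne' (hedge e he h)
    induction e with
    | h x y =>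
      have hx : x ≠ ℓ := fun h => hℓ (by rw [← h]; exact Sym2.mem_mk_left x y)
      have hy : y ≠ ℓ := fun h => hℓ (by rw [← h]; exact Sym2.mem_mk_right x y)
      simp only [Sym2.map_pair_eq, hP'w x hx, hP'w y hy]
  have hmapPsp : ∀ j, Sym2.map P s(ℓ, v) ≠ Sym2.diag j := by
    intro j h
    rw [Sym2.map_pair_eq, Sym2.diag, Sym2.eq_iff] at h
    rcases h with ⟨h1, h2⟩ | ⟨h1, h2⟩ <;> exact hsep (h1.trans h2.symm)
  have hmapP'sp : Sym2.map P' s(ℓ, v) = Sym2.diag (P v) := by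
    rw [Sym2.map_pair_eq, hP'ℓ, hP'w v (Ne.symm hne)]; rfl
  have hslv : s(ℓ, v) ∈ G.edgeSet := hadj
  have hEne : ∀ j, j ≠ P v →
      {e ∈ G.edgeSet | Sym2.map P' e = Sym2.diag j}
        = {e ∈ G.edgeSet | Sym2.map P e = Sym2.diag j} := by
    intro j hj
    ext e
    simp only [Set.mem_setOf_eq]
    constructor
    · rintro ⟨he, hmap⟩
      by_cases hc : e = s(ℓ, v)
      · subst hc
        rw [hmapP'sp] at hmap
        exact absurd (Sym2.diag_injective hmap).symm hj
      · exact ⟨he, (hmapP' e he hc) ▸ hmap⟩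
    · rintro ⟨he, hmap⟩
      by_cases hc : e = s(ℓ, v)
      · subst hc; exact absurd hmap (hmapPsp j)
      · exact ⟨he, (hmapP' e he hc).trans hmap⟩
  have hEv : {e ∈ G.edgeSet | Sym2.map P' e = Sym2.diag (P v)}
      = insert s(ℓ, v) {e ∈ G.edgeSet | Sym2.map P e = Sym2.diag (P v)} := by
    ext e
    simp only [Set.mem_setOf_eq, Set.mem_insert_iff]
    constructor
    · rintro ⟨he, hmap⟩
      by_cases hc : e = s(ℓ, v)
      · exact Or.inl hc
      · exact Or.inr ⟨he, (hmapP' e he hc) ▸ hmap⟩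
    · rintro (rfl | ⟨he, hmap⟩)
      · exact ⟨hslv, hmapP'sp⟩
      · by_cases hc : e = s(ℓ, v)
        · subst hc; exact absurd hmap (hmapPsp _)
        · exact ⟨he, (hmapP' e he hc).trans hmap⟩
  have hnotmem : s(ℓ, v) ∉ {e ∈ G.edgeSet | Sym2.map P e = Sym2.diag (P v)} :=
    fun h => hmapPsp _ h.2
  have hEcard : ({e ∈ G.edgeSet | Sym2.map P' e = Sym2.diag (P v)}).ncard
      = ({e ∈ G.edgeSet | Sym2.map P e = Sym2.diag (P v)}).ncard + 1 := by
    rw [hEv, Set.ncard_insert_of_notMem hnotmem (Set.toFinite _)]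
  have hℓnotin : ℓ ∉ Finset.univ.filter (fun w => P w = P v ∧ c w = true) := by
    simp [hsep]
  have hℓin : ℓ ∈ Finset.univ.filter (fun w => P w = P ℓ ∧ c w = true) := by
    simp [hred]
  have hRv : Finset.univ.filter (fun w => P' w = P v ∧ c w = true)
      = insert ℓ (Finset.univ.filter (fun w => P w = P v ∧ c w = true)) := by
    ext w
    simp only [Finset.mem_filter, Finset.mem_univ, true_and, Finset.mem_insert]
    by_cases hw : w = ℓ
    · subst hw; simp [hP'ℓ, hred]
    · rw [hP'w w hw]; simp [hw]
  have hRℓ : Finset.univ.filter (fun w => P' w = P ℓ ∧ c w = true)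
      = (Finset.univ.filter (fun w => P w = P ℓ ∧ c w = true)).erase ℓ := by
    ext w
    simp only [Finset.mem_filter, Finset.mem_univ, true_and, Finset.mem_erase]
    by_cases hw : w = ℓ
    · subst hw; simp [hP'ℓ, Ne.symm hsep]
    · rw [hP'w w hw]; simp [hw]
  have hRne : ∀ j, j ≠ P v → j ≠ P ℓ →
      Finset.univ.filter (fun w => P' w = j ∧ c w = true)
        = Finset.univ.filter (fun w => P w = j ∧ c w = true) := by
    intro j hjv hjl
    ext w
    simp only [Finset.mem_filter, Finset.mem_univ, true_and]
    by_cases hw : w = ℓ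
    · subst hw; rw [hP'ℓ]
      constructor
      · rintro ⟨h, _⟩; exact absurd h.symm hjv
      · rintro ⟨h, _⟩; exact absurd h.symm hjl
    · rw [hP'w w hw]
  have hBlue : ∀ j, Finset.univ.filter (fun w => P' w = j ∧ c w = false)
      = Finset.univ.filter (fun w => P w = j ∧ c w = false) := by
    intro j
    ext w
    simp only [Finset.mem_filter, Finset.mem_univ, true_and]
    by_cases hw : w = ℓ
    · subst hw; rw [hred]; simp
    · rw [hP'w w hw]
  have hdeg : ((G.neighborSet ℓ).ncard : ℚ) = 1 := by
    rw [hleaf, Set.ncard_singleton]; norm_num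
  have hsumRv : (∑ w ∈ Finset.univ.filter (fun w => P' w = P v ∧ c w = true),
        ((G.neighborSet w).ncard : ℚ))
      = (∑ w ∈ Finset.univ.filter (fun w => P w = P v ∧ c w = true),
        ((G.neighborSet w).ncard : ℚ)) + 1 := by
    rw [hRv, Finset.sum_insert hℓnotin, hdeg]; ring
  have hsumRℓ : (∑ w ∈ Finset.univ.filter (fun w => P' w = P ℓ ∧ c w = true),
        ((G.neighborSet w).ncard : ℚ))
      = (∑ w ∈ Finset.univ.filter (fun w => P w = P ℓ ∧ c w = true),
        ((G.neighborSet w).ncard : ℚ)) - 1 := by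
    rw [hRℓ]
    have h := Finset.sum_erase_add (Finset.univ.filter (fun w => P w = P ℓ ∧ c w = true))
      (fun w => ((G.neighborSet w).ncard : ℚ)) hℓin
    simp only [hdeg] at h
    linarith
  have hB₁' : B₁ = ∑ w ∈ Finset.univ.filter (fun w => P w = P ℓ ∧ c w = false),
      ((G.neighborSet w).ncard : ℚ) := by
    rw [hB₁]
    congr 1
    ext w
    simp only [Finset.mem_filter, Finset.mem_univ, true_and, ne_eq]
    constructor
    · rintro ⟨h1, h2, _⟩; exact ⟨h1, h2⟩
    · rintro ⟨h1, h2⟩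
      refine ⟨h1, h2, ?_⟩
      rintro rfl
      rw [hred] at h2
      exact absurd h2 (by simp)
  have hm0 : (0 : ℚ) < m := by exact_mod_cast Nat.lt_of_lt_of_le Nat.zero_lt_one hm1
  have hmain : bipartiteModularity G c m P' - bipartiteModularity G c m P
      = 1 / m - B' / (m : ℚ) ^ 2 + B₁ / (m : ℚ) ^ 2 := by
    unfold bipartiteModularity
    rw [← Finset.sum_sub_distrib]
    rw [← Finset.sum_subset (Finset.subset_univ ({P ℓ, P v} : Finset ι))
      (by
        intro j _ hj
        simp only [Finset.mem_insert, Finset.mem_singleton, not_or] at hj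
        rw [hEne j hj.2, hRne j hj.2 hj.1, hBlue j]
        ring)]
    rw [Finset.sum_pair hsep]
    rw [hEne (P ℓ) hsep, hBlue (P ℓ), hBlue (P v), hsumRℓ, hsumRv, hEcard]
    rw [← hB', ← hB₁']
    push_cast
    have hm0' : (m : ℚ) ≠ 0 := ne_of_gt hm0
    field_simp
    ring
  refine ⟨hmain, fun hlt => ?_⟩
  have hB₁0 : 0 ≤ B₁ := by
    rw [hB₁]
    exact Finset.sum_nonneg fun i _ => by positivity
  have h1 : B' / (m : ℚ) ^ 2 < 1 / m := by
    rw [div_lt_div_iff₀ (by positivity) hm0]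
    nlinarith
  have : 0 ≤ B₁ / (m : ℚ) ^ 2 := div_nonneg hB₁0 (by positivity)
  linarith [hmain]
end
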